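/- arXiv:2510.11735 — 6 statements merged into one kernel-verified Lean document; each statement's English description precedes it below -/
import Mathlib

section
/- Let n ≥ 2. For all k, m ∈ {1, …, n−1}, the 2^n × 2^n matrices L(k) and L(m) commute: L(k)·L(m) = L(m)·L(k). -/
open Matrix

noncomputable section

/-- Kronecker product of square matrices with flat `Fin` indexing
(first factor most significant: `(A ⊗ B)[i*b+r, j*b+s] = A[i,j] * B[r,s]`). -/
def kron {R : Type*} [Mul R] {a b : ℕ} (A : Matrix (Fin a) (Fin a) R)
    (B : Matrix (Fin b) (Fin b) R) : Matrix (Fin (a * b)) (Fin (a * b)) R := fun i j =>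
  have hb : 0 < b := Nat.pos_of_ne_zero fun hb0 => by
    subst hb0; exact absurd i.isLt (by omega)
  A ⟨i.val / b, Nat.div_lt_of_lt_mul (Nat.mul_comm a b ▸ i.isLt)⟩
    ⟨j.val / b, Nat.div_lt_of_lt_mul (Nat.mul_comm a b ▸ j.isLt)⟩ *
  B ⟨i.val % b, Nat.mod_lt _ hb⟩ ⟨j.val % b, Nat.mod_lt _ hb⟩

/-- Kronecker product of (column) vectors with flat `Fin` indexing. -/
def kronV {R : Type*} [Mul R] {a b : ℕ} (u : Fin a → R) (v : Fin b → R) :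
    Fin (a * b) → R := fun i =>
  have hb : 0 < b := Nat.pos_of_ne_zero fun hb0 => by
    subst hb0; exact absurd i.isLt (by omega)
  u ⟨i.val / b, Nat.div_lt_of_lt_mul (Nat.mul_comm a b ▸ i.isLt)⟩ *
  v ⟨i.val % b, Nat.mod_lt _ hb⟩

/-- Transport a square matrix along an equality of sizes. -/
def castM {R : Type*} {a b : ℕ} (h : a = b) (A : Matrix (Fin a) (Fin a) R) :
    Matrix (Fin b) (Fin b) R := fun i j => A (Fin.cast h.symm i) (Fin.cast h.symm j)

/-- Transport a vector along an equality of sizes. -/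
def castV {R : Type*} {a b : ℕ} (h : a = b) (u : Fin a → R) : Fin b → R :=
  fun i => u (Fin.cast h.symm i)

theorem two_pow_pred_mul_two {n : ℕ} (hn : 1 ≤ n) : 2 ^ (n - 1) * 2 = 2 ^ n := by
  rw [← pow_succ]; congr 1; omega

theorem half_lt {n x : ℕ} (hx : x < 2 ^ n) : x / 2 < 2 ^ (n - 1) := by
  rcases Nat.eq_zero_or_pos n with h | h
  · subst h; simp only [pow_zero] at hx ⊢; omega
  · have h2 : (2 : ℕ) ^ (n - 1) * 2 = 2 ^ n := two_pow_pred_mul_two h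
    omega

/-- `⌊j/2⌋` as an element of `Fin (2^(n-1))`. -/
def half {n : ℕ} (j : Fin (2 ^ n)) : Fin (2 ^ (n - 1)) := ⟨j.val / 2, half_lt j.isLt⟩

/-- The index `2i` (1-indexed: `2i-1`). -/
def dbl {n : ℕ} (hn : 1 ≤ n) (i : Fin (2 ^ (n - 1))) : Fin (2 ^ n) :=
  ⟨2 * i.val, by
    have h1 := i.isLt
    have h2 : (2 : ℕ) ^ (n - 1) * 2 = 2 ^ n := two_pow_pred_mul_two hn
    omega⟩

/-- The index `2i+1` (1-indexed: `2i`). -/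
def dbl1 {n : ℕ} (hn : 1 ≤ n) (i : Fin (2 ^ (n - 1))) : Fin (2 ^ n) :=
  ⟨2 * i.val + 1, by
    have h1 := i.isLt
    have h2 : (2 : ℕ) ^ (n - 1) * 2 = 2 ^ n := two_pow_pred_mul_two hn
    omega⟩

/-- The identity matrix `I_m` over `ℂ`. -/
def idM (m : ℕ) : Matrix (Fin m) (Fin m) ℂ := 1

/-- The 2×2 identity matrix `I_2`. -/
def I2 : Matrix (Fin 2) (Fin 2) ℂ := 1

/-- The Pauli matrix `X = [[0,1],[1,0]]`. -/
def pauliX : Matrix (Fin 2) (Fin 2) ℂ := !![0, 1; 1, 0]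

/-- The projector `π₀ = [[1,0],[0,0]]`. -/
def proj0 : Matrix (Fin 2) (Fin 2) ℂ := !![1, 0; 0, 0]

/-- The projector `π₁ = [[0,0],[0,1]]`. -/
def proj1 : Matrix (Fin 2) (Fin 2) ℂ := !![0, 0; 0, 1]

/-- `D₁(φ) = diag(e^{iφ}, e^{-iφ})`. -/
def D1 (φ : ℝ) : Matrix (Fin 2) (Fin 2) ℂ :=
  !![Complex.exp (Complex.I * (φ : ℂ)), 0; 0, Complex.exp (-(Complex.I * (φ : ℂ)))]

/-- `D_m(α) = diag(e^{iα₁}, …, e^{iα_{2^m}})`. -/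
def Dm (m : ℕ) (α : Fin (2 ^ m) → ℝ) : Matrix (Fin (2 ^ m)) (Fin (2 ^ m)) ℂ :=
  Matrix.diagonal fun j => Complex.exp (Complex.I * (α j : ℂ))

/-- The control matrix
`L(k) = I^{⊗(k-1)} ⊗ π₀ ⊗ I^{⊗(n-k)} + I^{⊗(k-1)} ⊗ π₁ ⊗ I^{⊗(n-k-1)} ⊗ X`
(defined to be the identity for `k` outside `{1,…,n-1}`). -/
def Lmat (n k : ℕ) : Matrix (Fin (2 ^ n)) (Fin (2 ^ n)) ℂ :=
  if h : 1 ≤ k ∧ k < n then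
    castM (by rw [← pow_succ, ← pow_add]; congr 1; omega)
      (kron (kron (idM (2 ^ (k - 1))) proj0) (idM (2 ^ (n - k)))) +
    castM (by rw [← pow_succ, ← pow_add, ← pow_succ]; congr 1; omega)
      (kron (kron (kron (idM (2 ^ (k - 1))) proj1) (idM (2 ^ (n - k - 1)))) pauliX)
  else 1

/-- The half of the binary-tree sequence: `a_2 = (1)`,
`a_m = (a_{m-1}+1) ∘ (1) ∘ (a_{m-1}+1)`. -/
def aSeq : ℕ → List ℕ
  | 0 => []
  | 1 => []
  | 2 => [1]
  | n + 3 => ((aSeq (n + 2)).map (· + 1)) ++ [1] ++ ((aSeq (n + 2)).map (· + 1))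

/-- The binary-tree sequence `A_n = a_n ∘ (1)`. -/
def ASeq (n : ℕ) : List ℕ := aSeq n ++ [1]

/-- The all-ones vector `[1,1]^{⊗k}` (of arbitrary length). -/
def onesV (m : ℕ) : Fin m → ℝ := fun _ => 1

/-- The vector `[1,-1]`. -/
def signV : Fin 2 → ℝ := ![1, -1]

/-- `v_m = [1,1]^{⊗(m-1)} ⊗ [1,-1] ⊗ [1,1]^{⊗(n-1-m)}`
(defined to be all-ones for `m` outside `{1,…,n-1}`). -/
def vvec (n m : ℕ) : Fin (2 ^ (n - 1)) → ℝ :=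
  if h : 1 ≤ m ∧ m ≤ n - 1 then
    castV (by rw [← pow_succ, ← pow_add]; congr 1; omega)
      (kronV (kronV (onesV (2 ^ (m - 1))) signV) (onesV (2 ^ (n - 1 - m))))
  else onesV _

/-- The matrix `r_n`: its `i`-th column is the entrywise product
`∏_{k=1}^{i-1} v_{A_n(k)}`.  (`rMat n j i` is the `(j,i)` entry, `i` the column.) -/
def rMat (n : ℕ) : Matrix (Fin (2 ^ (n - 1))) (Fin (2 ^ (n - 1))) ℝ :=
  fun j i => ∏ k ∈ Finset.range i.val, vvec n ((ASeq n).getD k 1) j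

/-- `r_2 = [[1,1],[1,-1]]`. -/
def r2 : Matrix (Fin 2) (Fin 2) ℝ := !![1, 1; 1, -1]

/-- The `m`-fold Kronecker power `r_2^{⊗m}`. -/
def r2pow : (m : ℕ) → Matrix (Fin (2 ^ m)) (Fin (2 ^ m)) ℝ
  | 0 => 1
  | m + 1 => castM (pow_succ 2 m).symm (kron (r2pow m) r2)

/-- The block-diagonal matrix with 2×2 blocks `D₁(γ₁), …, D₁(γ_{2^{n-1}})`. -/
def blockD1 (n : ℕ) (γ : Fin (2 ^ (n - 1)) → ℝ) :
    Matrix (Fin (2 ^ n)) (Fin (2 ^ n)) ℂ := fun x y =>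
  if x.val / 2 = y.val / 2 then
    D1 (γ (half x)) ⟨x.val % 2, Nat.mod_lt _ (by norm_num)⟩
      ⟨y.val % 2, Nat.mod_lt _ (by norm_num)⟩
  else 0

-- scratch: lemmas to insert before stmt1
def fL (n k x : ℕ) : ℕ :=
  if (x / 2 ^ (n - k)) % 2 = 1 then 2 * (x / 2) + (1 - x % 2) else x

lemma fL_split (n k x : ℕ) :
    fL n k x = 2 * (x / 2) + (if (x / 2 ^ (n - k)) % 2 = 1 then 1 - x % 2 else x % 2) := by
  unfold fL; split <;> omega

lemma fL_lt (n k x : ℕ) (hn : 1 ≤ n) (hx : x < 2 ^ n) : fL n k x < 2 ^ n := by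
  have h2 : 2 ^ (n - 1) * 2 = 2 ^ n := two_pow_pred_mul_two hn
  unfold fL; split <;> omega

lemma div_two_mul (x b e : ℕ) (hb : b < 2) : (2 * (x / 2) + b) / (2 * e) = x / (2 * e) := by
  rw [← Nat.div_div_eq_div_mul, ← Nat.div_div_eq_div_mul]
  congr 1
  omega

lemma fL_div (n m x e : ℕ) : fL n m x / (2 * e) = x / (2 * e) := by
  unfold fL; split
  · exact div_two_mul x _ e (by omega)
  · rfl

lemma pow_eq_two_mul (n k : ℕ) (h : 1 ≤ n - k) : (2:ℕ) ^ (n - k) = 2 * 2 ^ (n - k - 1) := by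
  rw [← pow_succ']; congr 1; omega

lemma fL_fL (n k m x : ℕ) (hk : 1 ≤ n - k) (hm : 1 ≤ n - m) :
    fL n k (fL n m x) = fL n m (fL n k x) := by
  have e1 : fL n m x / 2 ^ (n - k) = x / 2 ^ (n - k) := by
    rw [pow_eq_two_mul n k hk]; exact fL_div ..
  have e2 : fL n k x / 2 ^ (n - m) = x / 2 ^ (n - m) := by
    rw [pow_eq_two_mul n m hm]; exact fL_div ..
  have h1 : fL n m x / 2 = x / 2 := by rw [fL_split n m x]; split <;> omega
  have h2 : fL n k x / 2 = x / 2 := by rw [fL_split n k x]; split <;> omega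
  have h3 : fL n m x % 2 = if (x / 2 ^ (n - m)) % 2 = 1 then 1 - x % 2 else x % 2 := by
    rw [fL_split n m x]; split <;> omega
  have h4 : fL n k x % 2 = if (x / 2 ^ (n - k)) % 2 = 1 then 1 - x % 2 else x % 2 := by
    rw [fL_split n k x]; split <;> omega
  rw [fL_split n k (fL n m x), fL_split n m (fL n k x), e1, e2, h1, h2, h3, h4]
  split_ifs <;> omega


lemma proj0_app (a b : Fin 2) : proj0 a b = if a.val = 0 ∧ b.val = 0 then 1 else 0 := by
  fin_cases a <;> fin_cases b <;> simp [proj0]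

lemma proj1_app (a b : Fin 2) : proj1 a b = if a.val = 1 ∧ b.val = 1 then 1 else 0 := by
  fin_cases a <;> fin_cases b <;> simp [proj1]

lemma pauliX_app (a b : Fin 2) : pauliX a b = if a.val = b.val then 0 else 1 := by
  fin_cases a <;> fin_cases b <;> simp [pauliX]

lemma idM_app (m : ℕ) (a b : Fin m) : idM m a b = if a.val = b.val then 1 else 0 := by
  rw [idM, Matrix.one_apply]
  simp [Fin.ext_iff]

lemma eq_of_div_mod {r i j : ℕ} (h1 : i / r = j / r) (h2 : i % r = j % r) : i = j := by
  calc i = r * (i / r) + i % r := (Nat.div_add_mod i r).symm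
  _ = r * (j / r) + j % r := by rw [h1, h2]
  _ = j := Nat.div_add_mod j r

set_option maxHeartbeats 800000 in
lemma entry_arith (A B S T U V x y : ℕ)
    (H1 : A = B → S = T → x = y)
    (H3 : A = B → U = V → x / 2 = y / 2)
    (H5 : x / 2 = y / 2 → A = B)
    (H4 : x / 2 = y / 2 → U = V)
    (H6 : x = y → S = T)
    (H7 : x = y → A = B) :
    (((if A / 2 = B / 2 then (1:ℂ) else 0) * if A % 2 = 0 ∧ B % 2 = 0 then 1 else 0) *
        if S = T then 1 else 0) +
      ((((if A / 2 = B / 2 then (1:ℂ) else 0) * if A % 2 = 1 ∧ B % 2 = 1 then 1 else 0) *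
          if U = V then 1 else 0) * if x % 2 = y % 2 then 0 else 1) =
    if y = (if A % 2 = 1 then 2 * (x / 2) + (1 - x % 2) else x) then 1 else 0 := by
  by_cases hxy : x = y
  · have hst := H6 hxy
    have hab := H7 hxy
    have huv := H4 (by rw [hxy])
    clear H1 H3 H5 H4 H6 H7
    split_ifs <;> first | (exfalso; omega) | norm_num
  · by_cases hab : A = B
    · have hst : ¬S = T := fun h => hxy (H1 hab h)
      by_cases hx2 : x / 2 = y / 2
      · have huv := H4 hx2
        clear H1 H3 H5 H4 H6 H7
        split_ifs <;> first | (exfalso; omega) | norm_num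
      · have huv : ¬U = V := fun h => hx2 (H3 hab h)
        clear H1 H3 H5 H4 H6 H7
        split_ifs <;> first | (exfalso; omega) | norm_num
    · have hx2 : ¬x / 2 = y / 2 := fun h => hab (H5 h)
      clear H1 H3 H5 H4 H6 H7
      split_ifs <;> first | (exfalso; omega) | norm_num

lemma Lmat_apply (n k : ℕ) (hn : 2 ≤ n) (hk1 : 1 ≤ k) (hk2 : k ≤ n - 1)
    (i j : Fin (2 ^ n)) : Lmat n k i j = if j.val = fL n k i.val then 1 else 0 := by
  rw [Lmat, dif_pos ⟨hk1, by omega⟩]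
  have hnk : 1 ≤ n - k := by omega
  have hpow : (2:ℕ) ^ (n - k) = 2 * 2 ^ (n - k - 1) := pow_eq_two_mul n k hnk
  have e : ∀ x : ℕ, x / 2 / 2 ^ (n - k - 1) = x / 2 ^ (n - k) := fun x => by
    rw [Nat.div_div_eq_div_mul, ← hpow]
  simp only [Matrix.add_apply, castM, kron, idM_app, proj0_app, proj1_app, pauliX_app,
    Fin.coe_cast, e, fL]
  have H1 : (i:ℕ) / 2 ^ (n - k) = (j:ℕ) / 2 ^ (n - k) →
      (i:ℕ) % 2 ^ (n - k) = (j:ℕ) % 2 ^ (n - k) → (i:ℕ) = (j:ℕ) :=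
    fun h1 h2 => eq_of_div_mod h1 h2
  have H3 : (i:ℕ) / 2 ^ (n - k) = (j:ℕ) / 2 ^ (n - k) →
      ((i:ℕ) / 2) % 2 ^ (n - k - 1) = ((j:ℕ) / 2) % 2 ^ (n - k - 1) →
      (i:ℕ) / 2 = (j:ℕ) / 2 :=
    fun h1 h2 => eq_of_div_mod (r := 2 ^ (n - k - 1)) (by rw [e, e]; exact h1) h2
  have H5 : (i:ℕ) / 2 = (j:ℕ) / 2 →
      (i:ℕ) / 2 ^ (n - k) = (j:ℕ) / 2 ^ (n - k) := fun h => by rw [← e, ← e, h]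
  have H4 : (i:ℕ) / 2 = (j:ℕ) / 2 →
      ((i:ℕ) / 2) % 2 ^ (n - k - 1) = ((j:ℕ) / 2) % 2 ^ (n - k - 1) := fun h => by rw [h]
  have H6 : (i:ℕ) = (j:ℕ) → (i:ℕ) % 2 ^ (n - k) = (j:ℕ) % 2 ^ (n - k) := fun h => by rw [h]
  have H7 : (i:ℕ) = (j:ℕ) → (i:ℕ) / 2 ^ (n - k) = (j:ℕ) / 2 ^ (n - k) := fun h => by rw [h]
  exact entry_arith _ _ _ _ _ _ _ _ H1 H3 H5 H4 H6 H7

lemma mul_apply_perm {N : ℕ} (f g : ℕ → ℕ) (hf : ∀ x : Fin N, f x < N)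
    (L M : Matrix (Fin N) (Fin N) ℂ)
    (hL : ∀ i j, L i j = if (j:ℕ) = f i then 1 else 0)
    (hM : ∀ i j, M i j = if (j:ℕ) = g i then 1 else 0) (i j : Fin N) :
    (L * M) i j = if (j:ℕ) = g (f i) then 1 else 0 := by
  rw [Matrix.mul_apply]
  rw [Finset.sum_eq_single (⟨f i, hf i⟩ : Fin N)]
  · rw [hL, hM]; simp
  · intro b _ hb
    rw [hL, if_neg fun h => hb (Fin.ext h), zero_mul]
  · intro h; exact absurd (Finset.mem_univ _) h

theorem stmt1 (n : ℕ) (hn : 2 ≤ n) (k m : ℕ)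
    (hk1 : 1 ≤ k) (hk2 : k ≤ n - 1) (hm1 : 1 ≤ m) (hm2 : m ≤ n - 1) :
    Lmat n k * Lmat n m = Lmat n m * Lmat n k := by
  ext i j
  rw [mul_apply_perm (fL n k) (fL n m) (fun x => fL_lt n k x (by omega) x.isLt)
      _ _ (Lmat_apply n k hn hk1 hk2) (Lmat_apply n m hn hm1 hm2),
    mul_apply_perm (fL n m) (fL n k) (fun x => fL_lt n m x (by omega) x.isLt)
      _ _ (Lmat_apply n m hn hm1 hm2) (Lmat_apply n k hn hk1 hk2),
    fL_fL n m k i (by omega) (by omega)]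

end
end

section
/- Let n ≥ 2 and let A : {1,…,2^{n-1}} → {1,…,n−1} be any sequence. If there exists m ∈ {1,…,n−1} such that the number of indices i with A(i) = m is odd, then for every choice of real parameters β_1, …, β_{2^{n-1}}, the matrix U = ∏_{i=1}^{2^{n-1}} ( (I_{2^{n-1}} ⊗ D_1(β_i)) · L(A(i)) ) is not a diagonal matrix. -/
open Matrix

noncomputable section

lemma proj0_apply (i j : Fin 2) : proj0 i j = if i.val = 0 ∧ j.val = 0 then 1 else 0 := by
  fin_cases i <;> fin_cases j <;> simp [proj0]
lemma proj1_apply (i j : Fin 2) : proj1 i j = if i.val = 1 ∧ j.val = 1 then 1 else 0 := by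
  fin_cases i <;> fin_cases j <;> simp [proj1]
lemma pauliX_apply (i j : Fin 2) : pauliX i j = if i.val + j.val = 1 then 1 else 0 := by
  fin_cases i <;> fin_cases j <;> simp [pauliX]
lemma boole3 (p q r : Prop) [Decidable p] [Decidable q] [Decidable r] :
    ((if p then (1:ℂ) else 0) * if q then 1 else 0) * (if r then 1 else 0) =
      if p ∧ q ∧ r then 1 else 0 := by
  split_ifs <;> simp_all

lemma boole4 (p q r s : Prop) [Decidable p] [Decidable q] [Decidable r] [Decidable s] :
    (((if p then (1:ℂ) else 0) * if q then 1 else 0) * (if r then 1 else 0)) *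
      (if s then 1 else 0) = if p ∧ q ∧ r ∧ s then 1 else 0 := by
  split_ifs <;> simp_all

lemma div_mod_ext {x y d : ℕ} (h1 : x / d = y / d) (h2 : x % d = y % d) : x = y := by
  rw [← Nat.div_add_mod x d, h1, h2, Nat.div_add_mod]

lemma Lmat_col (n k : ℕ) (hk1 : 1 ≤ k) (hk2 : k < n) (x y : Fin (2 ^ n)) :
    Lmat n k x y = if x.val = (if (y.val / 2 ^ (n - k)) % 2 = 0 then y.val
      else 2 * (y.val / 2) + (1 - y.val % 2)) then 1 else 0 := by
  have hpow : 2 * 2 ^ (n - k - 1) = 2 ^ (n - k) := by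
    rw [← pow_succ']; congr 1; omega
  have hdd : ∀ z : ℕ, z / 2 / 2 ^ (n - k - 1) = z / 2 ^ (n - k) := fun z => by
    rw [Nat.div_div_eq_div_mul, hpow]
  rw [Lmat, dif_pos ⟨hk1, hk2⟩]
  simp only [Matrix.add_apply, castM, kron, Fin.coe_cast, idM, Matrix.one_apply, Fin.mk.injEq,
    proj0_apply, proj1_apply, pauliX_apply]
  rw [boole3, boole4]
  simp only [hdd]
  rcases Nat.mod_two_eq_zero_or_one (y.val / 2 ^ (n - k)) with hb | hb
  · rw [if_pos hb, if_neg (fun h : _ ∧ (_ ∧ _ % 2 = 1) ∧ _ ∧ _ => by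
      have := h.2.1.2; omega), add_zero]
    by_cases hxy : (x : ℕ) = (y : ℕ)
    · rw [if_pos ⟨by rw [hxy], ⟨by rw [hxy]; exact hb, hb⟩, by rw [hxy]⟩, if_pos hxy]
    · rw [if_neg (fun h => hxy
        (div_mod_ext (div_mod_ext h.1 (h.2.1.1.trans h.2.1.2.symm)) h.2.2)), if_neg hxy]
  · rw [if_neg (by omega : ¬ (y : ℕ) / 2 ^ (n - k) % 2 = 0),
      if_neg (fun h : _ ∧ (_ % 2 = 0 ∧ _) ∧ _ => by have := h.2.1.2; omega), zero_add]
    by_cases hx : (x : ℕ) = 2 * ((y : ℕ) / 2) + (1 - (y : ℕ) % 2)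
    · have h2 : (x : ℕ) / 2 = (y : ℕ) / 2 := by omega
      have h3 : (x : ℕ) / 2 ^ (n - k) = (y : ℕ) / 2 ^ (n - k) := by
        rw [← hdd, h2, hdd]
      rw [if_pos ⟨by rw [h3], ⟨by rw [h3]; exact hb, hb⟩, by rw [h2], by omega⟩, if_pos hx]
    · rw [if_neg, if_neg hx]
      rintro ⟨h4, ⟨h5x, h5y⟩, h6, h7⟩
      have h3 : (x : ℕ) / 2 ^ (n - k) = (y : ℕ) / 2 ^ (n - k) :=
        div_mod_ext h4 (h5x.trans h5y.symm)
      have h2 : (x : ℕ) / 2 = (y : ℕ) / 2 :=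
        div_mod_ext (d := 2 ^ (n - k - 1)) (by rw [hdd, hdd]; exact h3) h6
      exact hx (by omega)

lemma D1_apply (φ : ℝ) (i j : Fin 2) : D1 φ i j =
    if i = j then (if i.val = 0 then Complex.exp (Complex.I * φ)
      else Complex.exp (-(Complex.I * φ))) else 0 := by
  fin_cases i <;> fin_cases j <;> simp [D1]

lemma Dfac_ne {n : ℕ} (h : 2 ^ (n - 1) * 2 = 2 ^ n) (φ : ℝ) (x y : Fin (2 ^ n))
    (hxy : x ≠ y) : castM h (kron (idM (2 ^ (n - 1))) (D1 φ)) x y = 0 := by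
  simp only [castM, kron, Fin.coe_cast, idM, Matrix.one_apply, Fin.mk.injEq, D1_apply]
  have hne : ¬((x : ℕ) / 2 = (y : ℕ) / 2 ∧ (x : ℕ) % 2 = (y : ℕ) % 2) :=
    fun hh => hxy (Fin.ext (div_mod_ext hh.1 hh.2))
  by_cases h1 : (x : ℕ) / 2 = (y : ℕ) / 2
  · rw [if_neg (fun h2 => hne ⟨h1, h2⟩), mul_zero]
  · rw [if_neg h1, zero_mul]

lemma Dfac_diag {n : ℕ} (h : 2 ^ (n - 1) * 2 = 2 ^ n) (φ : ℝ) (x : Fin (2 ^ n)) :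
    castM h (kron (idM (2 ^ (n - 1))) (D1 φ)) x x ≠ 0 := by
  simp only [castM, kron, Fin.coe_cast, idM, Matrix.one_apply, Fin.mk.injEq, D1_apply,
    if_pos rfl]
  split_ifs <;> simp [Complex.exp_ne_zero]

lemma diag_mul_apply {N : ℕ} (D L : Matrix (Fin N) (Fin N) ℂ)
    (hD : ∀ x y, x ≠ y → D x y = 0) (x y : Fin N) : (D * L) x y = D x x * L x y := by
  rw [Matrix.mul_apply]
  exact Finset.sum_eq_single x (fun b _ hb => by rw [hD x b (Ne.symm hb), zero_mul])
    (fun hx => absurd (Finset.mem_univ x) hx)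

lemma count_link {N : ℕ} (A : Fin N → ℕ) (m : ℕ) :
    (Finset.univ.filter (fun i => A i = m)).card =
      (List.finRange N).countP (fun i => A i = m) := by
  simp [Fin.univ_def, Finset.filter, Finset.card, List.countP_eq_length_filter]

set_option maxHeartbeats 1000000 in
lemma key_aux (n : ℕ) (hn : 2 ≤ n) (A : Fin (2 ^ (n - 1)) → ℕ)
    (hA : ∀ i, 1 ≤ A i ∧ A i ≤ n - 1)
    (m : ℕ) (hm1 : 1 ≤ m) (hm2 : m ≤ n - 1)
    (β : Fin (2 ^ (n - 1)) → ℝ)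
    (h2n : 2 ^ (n - 1) * 2 = 2 ^ n)
    (hpm2 : 2 ≤ 2 ^ (n - m))
    (hpm_even : 2 ^ (n - m) = 2 * 2 ^ (n - m - 1))
    (hpmlt : 2 ^ (n - m) + 2 ≤ 2 ^ n)
    (F : Fin (2 ^ (n - 1)) → Matrix (Fin (2 ^ n)) (Fin (2 ^ n)) ℂ)
    (hF : ∀ i, F i = castM h2n (kron (idM (2 ^ (n - 1))) (D1 (β i))) * Lmat n (A i)) :
    ∀ (l : List (Fin (2 ^ (n - 1)))) (ε : ℕ), ε < 2 →
      ∀ y : Fin (2 ^ n), (y : ℕ) = 2 ^ (n - m) + ε →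
      ∃ c : ℂ, c ≠ 0 ∧ ∀ x : Fin (2 ^ n),
        ((l.map F).prod) x y =
          if (x : ℕ) = 2 ^ (n - m) + (ε + l.countP (fun i => A i = m)) % 2 then c
          else 0 := by
  intro l
  induction l with
  | nil =>
    intro ε hε y hy
    refine ⟨1, one_ne_zero, fun x => ?_⟩
    simp only [List.map_nil, List.prod_nil, List.countP_nil, Nat.add_zero,
      Nat.mod_eq_of_lt hε, ← hy, Matrix.one_apply]
    split_ifs with h1 h2 h3 <;> simp_all [Fin.ext_iff]
  | cons hd tl ih =>
    intro ε hε y hy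
    obtain ⟨c, hc, hcol⟩ := ih ε hε y hy
    obtain ⟨ε', hε'⟩ : ∃ e, (ε + tl.countP (fun i => A i = m)) % 2 = e := ⟨_, rfl⟩
    have hε'lt : ε' < 2 := hε' ▸ Nat.mod_lt _ (by norm_num)
    rw [hε'] at hcol
    set y' : Fin (2 ^ n) := ⟨2 ^ (n - m) + ε', by omega⟩ with hy'def
    have hsum : ∀ x, (((hd :: tl).map F).prod) x y = F hd x y' * c := by
      intro x
      rw [List.map_cons, List.prod_cons, Matrix.mul_apply,
        Finset.sum_eq_single y'
          (fun b _ hb => by rw [hcol b, if_neg (fun hv => hb (Fin.ext hv)), mul_zero])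
          (fun hmem => absurd (Finset.mem_univ _) hmem),
        hcol y', if_pos rfl]
    have hAlt : A hd < n := by have := (hA hd).2; omega
    by_cases hAm : A hd = m
    · -- control bit set: target flips
      have hq : ((y' : ℕ) / 2 ^ (n - A hd)) % 2 = 1 := by
        show ((2 ^ (n - m) + ε') / 2 ^ (n - A hd)) % 2 = 1
        rw [hAm, Nat.add_comm, Nat.add_div_right _ (by positivity),
          Nat.div_eq_of_lt (by omega)]
      have hflip : 2 * ((y' : ℕ) / 2) + (1 - (y' : ℕ) % 2) = 2 ^ (n - m) + (1 - ε') := by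
        show 2 * ((2 ^ (n - m) + ε') / 2) + (1 - (2 ^ (n - m) + ε') % 2) = _
        omega
      have hcnt : (hd :: tl).countP (fun i => A i = m) =
          tl.countP (fun i => A i = m) + 1 := by
        simp [List.countP_cons, hAm]
      have hcond : 2 ^ (n - m) + (ε + (hd :: tl).countP (fun i => A i = m)) % 2 =
          2 ^ (n - m) + (1 - ε') := by rw [hcnt]; omega
      obtain ⟨tF, htF⟩ : ∃ t : Fin (2 ^ n), (t : ℕ) = 2 ^ (n - m) + (1 - ε') :=
        ⟨⟨_, by omega⟩, rfl⟩
      obtain ⟨D, hD⟩ : ∃ D, castM h2n (kron (idM (2 ^ (n - 1))) (D1 (β hd))) = D := ⟨_, rfl⟩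
      have hFhd : F hd = D * Lmat n (A hd) := by rw [hF hd, hD]
      refine ⟨D tF tF * c, mul_ne_zero (hD ▸ Dfac_diag h2n (β hd) tF) hc, fun x => ?_⟩
      refine (hsum x).trans ?_
      conv_lhs => rw [hFhd, diag_mul_apply _ _ (fun a b hab => hD ▸ Dfac_ne h2n (β hd) a b hab),
        Lmat_col n (A hd) (hA hd).1 hAlt x y',
        if_neg (show ¬((y' : ℕ) / 2 ^ (n - A hd)) % 2 = 0 by omega), hflip]
      conv_rhs => rw [hcond]
      by_cases hx : (x : ℕ) = 2 ^ (n - m) + (1 - ε')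
      · rw [if_pos hx, if_pos hx, mul_one, show x = tF from Fin.ext (hx.trans htF.symm)]
      · rw [if_neg hx, if_neg hx, mul_zero, zero_mul]
    · -- control bit zero: target stays
      have hbit : ((y' : ℕ) / 2 ^ (n - A hd)) % 2 = 0 := by
        show ((2 ^ (n - m) + ε') / 2 ^ (n - A hd)) % 2 = 0
        rcases Nat.lt_or_ge (A hd) m with hlt | hge
        · rw [Nat.div_eq_of_lt, Nat.zero_mod]
          calc 2 ^ (n - m) + ε' < 2 ^ (n - m) + 2 ^ (n - m) := by omega
          _ = 2 ^ (n - m + 1) := by rw [pow_succ]; ring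
          _ ≤ 2 ^ (n - A hd) := Nat.pow_le_pow_right (by norm_num) (by omega)
        · have hge' : m < A hd := lt_of_le_of_ne hge (fun h => hAm h.symm)
          have hdvd : 2 ^ (n - m) = 2 ^ (n - A hd) * 2 ^ (A hd - m) := by
            rw [← pow_add]; congr 1; omega
          have hsmall : ε' / 2 ^ (n - A hd) = 0 := by
            apply Nat.div_eq_of_lt
            calc ε' < 2 := hε'lt
            _ = 2 ^ 1 := rfl
            _ ≤ 2 ^ (n - A hd) := Nat.pow_le_pow_right (by norm_num) (by omega)
          have heven : 2 ^ (A hd - m) = 2 * 2 ^ (A hd - m - 1) := by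
            rw [← pow_succ']; congr 1; omega
          rw [hdvd, Nat.mul_add_div (by positivity), hsmall]
          omega
      have hcnt : (hd :: tl).countP (fun i => A i = m) =
          tl.countP (fun i => A i = m) := by
        simp [List.countP_cons, hAm]
      have hcond : 2 ^ (n - m) + (ε + (hd :: tl).countP (fun i => A i = m)) % 2 =
          2 ^ (n - m) + ε' := by rw [hcnt, hε']
      obtain ⟨D, hD⟩ : ∃ D, castM h2n (kron (idM (2 ^ (n - 1))) (D1 (β hd))) = D := ⟨_, rfl⟩
      have hFhd : F hd = D * Lmat n (A hd) := by rw [hF hd, hD]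
      refine ⟨D y' y' * c, mul_ne_zero (hD ▸ Dfac_diag h2n (β hd) y') hc, fun x => ?_⟩
      refine (hsum x).trans ?_
      conv_lhs => rw [hFhd, diag_mul_apply _ _ (fun a b hab => hD ▸ Dfac_ne h2n (β hd) a b hab),
        Lmat_col n (A hd) (hA hd).1 hAlt x y', if_pos hbit]
      conv_rhs => rw [hcond]
      by_cases hx : (x : ℕ) = 2 ^ (n - m) + ε'
      · rw [if_pos (show (x : ℕ) = (y' : ℕ) from hx), if_pos hx, mul_one,
          show x = y' from Fin.ext hx]
      · rw [if_neg (show ¬(x : ℕ) = (y' : ℕ) from hx), if_neg hx, mul_zero, zero_mul]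

set_option maxHeartbeats 1000000 in
theorem stmt3 (n : ℕ) (hn : 2 ≤ n) (A : Fin (2 ^ (n - 1)) → ℕ)
    (hA : ∀ i, 1 ≤ A i ∧ A i ≤ n - 1)
    (m : ℕ) (hm1 : 1 ≤ m) (hm2 : m ≤ n - 1)
    (hodd : Odd (Finset.univ.filter (fun i => A i = m)).card)
    (β : Fin (2 ^ (n - 1)) → ℝ) :
    ¬ (((List.finRange (2 ^ (n - 1))).map (fun i =>
          castM (two_pow_pred_mul_two (by omega))
            (kron (idM (2 ^ (n - 1))) (D1 (β i))) *
          Lmat n (A i))).prod).IsDiag := by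
  have hn1 : 1 ≤ n := by omega
  have h2n : 2 ^ (n - 1) * 2 = 2 ^ n := two_pow_pred_mul_two hn1
  have hpm2 : 2 ≤ 2 ^ (n - m) := by
    calc (2:ℕ) = 2 ^ 1 := rfl
    _ ≤ 2 ^ (n - m) := Nat.pow_le_pow_right (by norm_num) (by omega)
  have hpm_even : 2 ^ (n - m) = 2 * 2 ^ (n - m - 1) := by
    rw [← pow_succ']; congr 1; omega
  have hpmle : 2 ^ (n - m) ≤ 2 ^ (n - 1) := Nat.pow_le_pow_right (by norm_num) (by omega)
  have h2n1 : 2 ≤ 2 ^ (n - 1) := by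
    calc (2:ℕ) = 2 ^ 1 := rfl
    _ ≤ 2 ^ (n - 1) := Nat.pow_le_pow_right (by norm_num) (by omega)
  have hpmlt : 2 ^ (n - m) + 2 ≤ 2 ^ n := by omega
  intro hdiag
  obtain ⟨c, hc, hcol⟩ := key_aux n hn A hA m hm1 hm2 β h2n hpm2 hpm_even hpmlt
    (fun i => castM h2n (kron (idM (2 ^ (n - 1))) (D1 (β i))) * Lmat n (A i))
    (fun i => rfl) (List.finRange (2 ^ (n - 1))) 0 (by norm_num)
    ⟨2 ^ (n - m), by omega⟩ ((Nat.add_zero _).symm)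
  have hcard := count_link A m
  obtain ⟨j, hj⟩ := hodd
  have h1 := hcol ⟨2 ^ (n - m) + 1, by omega⟩
  rw [if_pos (by show 2 ^ (n - m) + 1 = _; omega)] at h1
  exact hc (h1.symm.trans (hdiag (by
    apply Fin.ne_of_val_ne
    show 2 ^ (n - m) + 1 ≠ 2 ^ (n - m)
    omega)))

end
end

section
/- Let n ≥ 2 and let A_n be the binary-tree sequence. Then: (1) the length of a_n is 2^{n-1} − 1 and the length of A_n is 2^{n-1}; (2) every term of A_n lies in {1, …, n−1}; (3) for every m ∈ {1, …, n−1}, the number of indices i with A_n(i) = m is even. -/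
/-!
Since `a_{n+1}` is two copies of `a_n + 1` around a single `1`, the quantity `|a_n| + 1` doubles at
each step, the entries grow by at most one per step, `1` occurs exactly once in `a_n` (the shifted
copies contain no `1`), and every `m ≥ 2` occurs in `a_{n+1}` twice as often as `m - 1` in `a_n`.
The final `1` of `A_n` makes the number of `1`s even as well.
-/

open Matrix

noncomputable section

lemma aSeq_add_three (k : ℕ) :
    aSeq (k + 3) = (aSeq (k + 2)).map (· + 1) ++ [1] ++ (aSeq (k + 2)).map (· + 1) := rfl

lemma count_succ_map_succ (l : List ℕ) (m : ℕ) : (l.map (· + 1)).count (m + 1) = l.count m :=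
  l.count_map_of_injective _ (add_left_injective 1) m

lemma length_aSeq_add_one (k : ℕ) : (aSeq (k + 2)).length + 1 = 2 ^ (k + 1) := by
  induction k with
  | zero => rfl
  | succ k ih =>
    simp only [aSeq_add_three, List.length_append, List.length_map, List.length_singleton]
    rw [pow_succ]
    omega

lemma mem_aSeq_bounds {k x : ℕ} (hx : x ∈ aSeq (k + 2)) : 1 ≤ x ∧ x ≤ k + 1 := by
  induction k generalizing x with
  | zero => simp_all [aSeq]
  | succ k ih =>
    simp only [aSeq_add_three, List.mem_append, List.mem_map, List.mem_singleton] at hx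
    rcases hx with (⟨y, hy, rfl⟩ | rfl) | ⟨y, hy, rfl⟩ <;> grind

lemma count_one_aSeq (k : ℕ) : (aSeq (k + 2)).count 1 = 1 := by
  cases k with
  | zero => rfl
  | succ k =>
    have hzero : (aSeq (k + 2)).count 0 = 0 :=
      List.count_eq_zero_of_not_mem fun h => by have := mem_aSeq_bounds h; omega
    simp [aSeq_add_three, count_succ_map_succ, hzero]

lemma even_count_aSeq (k : ℕ) {m : ℕ} (hm : 2 ≤ m) : Even ((aSeq (k + 2)).count m) := by
  obtain ⟨m, rfl⟩ : ∃ m', m = m' + 2 := ⟨m - 2, by omega⟩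
  cases k with
  | zero => simp [aSeq]
  | succ k => simp [aSeq_add_three, count_succ_map_succ]

theorem stmt5 (n : ℕ) (hn : 2 ≤ n) :
    (aSeq n).length = 2 ^ (n - 1) - 1 ∧
    (ASeq n).length = 2 ^ (n - 1) ∧
    (∀ x ∈ ASeq n, 1 ≤ x ∧ x ≤ n - 1) ∧
    (∀ m, 1 ≤ m → m ≤ n - 1 → Even ((ASeq n).count m)) := by
  obtain ⟨k, rfl⟩ : ∃ k, n = k + 2 := ⟨n - 2, by omega⟩
  have hlen := length_aSeq_add_one k
  simp only [ASeq, Nat.add_succ_sub_one, List.length_append, List.length_singleton,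
    List.mem_append, List.mem_singleton, List.count_append, List.count_singleton]
  refine ⟨by omega, hlen, ?_, fun m hm1 hm2 => ?_⟩
  · rintro x (hx | rfl)
    · exact mem_aSeq_bounds hx
    · omega
  · rcases hm1.eq_or_lt with rfl | hm
    · simp [count_one_aSeq]
    · simpa [hm.ne] using even_count_aSeq k hm

end
end

section
/- Let n ≥ 1. There exists a permutation σ of {1, …, 2^n} such that for every i, the i-th column of r_{n+1} equals the σ(i)-th column of r_2^{⊗n} (the n-fold Kronecker power of r_2); equivalently, r_{n+1} = r_2^{⊗n} · P for some permutation matrix P. -/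
open Matrix

noncomputable section

/-!
Index rows and columns from `0`. The `(j, c)` entry of `r_2^{⊗n}` is the Walsh sign
`(-1)^{#(bits of j ∧ bits of c)}`, which turns `xor` in `c` into multiplication, and `v_m` is the
Walsh column of `c = 2^(n-m)`. So column `i` of `r_{n+1}` is the Walsh column of the `xor` of the
`2^(n - A(k))`, `k < i`. The recursion `a_m = (a_{m-1}+1) ∘ (1) ∘ (a_{m-1}+1)` mirrors the
recursion of the reflected Gray code `g(i) = i xor ⌊i/2⌋`: `2^(n - a(k))` is the bit in which
`g(k)` and `g(k+1)` differ. Hence column `i` of `r_{n+1}` is column `g(i)` of `r_2^{⊗n}`, and `g`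
permutes `{0, …, 2^n - 1}`.
-/

namespace Nat

def grayCode (i : ℕ) : ℕ := i ^^^ i / 2

theorem two_pow_add_eq_xor_of_lt {n b : ℕ} (hb : b < 2 ^ n) : 2 ^ n + b = 2 ^ n ^^^ b := by
  apply eq_of_testBit_eq
  intro i
  rcases lt_trichotomy i n with hi | rfl | hi
  · simp [testBit_two_pow_add_gt hi, hi.ne']
  · simp [testBit_two_pow_add_eq, testBit_lt_two_pow hb]
  · have hb' : b < 2 ^ i := hb.trans (Nat.pow_lt_pow_right one_lt_two hi)
    have hsum : 2 ^ n + b < 2 ^ i := by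
      have := Nat.pow_le_pow_right two_pos hi; rw [pow_succ] at this; omega
    simp [testBit_lt_two_pow hsum, testBit_lt_two_pow hb', hi.ne]

theorem grayCode_xor (a b : ℕ) : grayCode (a ^^^ b) = grayCode a ^^^ grayCode b := by
  simp only [grayCode, xor_div_two]
  ac_rfl

theorem grayCode_zero : grayCode 0 = 0 := rfl

theorem grayCode_injective : Function.Injective grayCode := by
  suffices h : ∀ x, grayCode x = 0 → x = 0 by
    intro a b hab
    exact eq_of_xor_eq_zero (h _ (by rw [grayCode_xor, hab, Nat.xor_self]))
  intro x hx
  have : x = x / 2 := by simpa [grayCode] using hx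
  omega

theorem grayCode_lt_two_pow {n i : ℕ} (hi : i < 2 ^ n) : grayCode i < 2 ^ n :=
  xor_lt_two_pow hi ((Nat.div_le_self i 2).trans_lt hi)

theorem grayCode_two_pow_add {n s : ℕ} (hs : s < 2 ^ n) :
    grayCode (2 ^ n + s) = grayCode (2 ^ n) ^^^ grayCode s := by
  rw [two_pow_add_eq_xor_of_lt hs, grayCode_xor]

theorem grayCode_two_pow (n : ℕ) : grayCode (2 ^ n) = grayCode (2 ^ n - 1) ^^^ 2 ^ n := by
  have hlt : 2 ^ n - 1 < 2 ^ n := Nat.sub_lt (Nat.two_pow_pos n) one_pos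
  have hhalf : (2 ^ n + (2 ^ n - 1)) / 2 = 2 ^ n - 1 := by omega
  have hxor : grayCode (2 ^ n - 1) ^^^ grayCode (2 ^ n) = 2 ^ n := by
    rw [← grayCode_xor, Nat.xor_comm, ← two_pow_add_eq_xor_of_lt hlt, grayCode, hhalf,
      two_pow_add_eq_xor_of_lt hlt, Nat.xor_assoc, Nat.xor_self, Nat.xor_zero]
  exact (Nat.xor_xor_cancel_left _ _).symm.trans (congrArg _ hxor)

end Nat

theorem aSeq_succ_succ (n : ℕ) :
    aSeq (n + 2) = (aSeq (n + 1)).map (· + 1) ++ [1] ++ (aSeq (n + 1)).map (· + 1) := by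
  cases n <;> rfl

theorem length_aSeq (n : ℕ) : (aSeq (n + 1)).length = 2 ^ n - 1 := by
  induction n with
  | zero => rfl
  | succ n ih =>
    rw [aSeq_succ_succ]
    simp only [List.length_append, List.length_map, List.length_singleton, ih, pow_succ]
    have := Nat.two_pow_pos n
    omega

theorem mem_aSeq {n x : ℕ} (hx : x ∈ aSeq (n + 1)) : 1 ≤ x ∧ x ≤ n := by
  induction n generalizing x with
  | zero => simp [aSeq] at hx
  | succ n ih =>
    rw [aSeq_succ_succ] at hx
    simp only [List.mem_append, List.mem_map, List.mem_singleton] at hx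
    rcases hx with (⟨y, hy, rfl⟩ | rfl) | ⟨y, hy, rfl⟩ <;> grind

open Nat in
theorem grayCode_succ_eq_xor_aSeq (n k : ℕ) (hk : k < (aSeq (n + 1)).length) :
    grayCode (k + 1) = grayCode k ^^^ 2 ^ (n - (aSeq (n + 1))[k]) := by
  induction n generalizing k with
  | zero => simp [aSeq] at hk
  | succ n ih =>
    have hL := length_aSeq n
    simp only [aSeq_succ_succ, List.getElem_append, List.getElem_map, List.length_append,
      List.length_map, List.length_singleton] at hk ⊢
    split_ifs with h₁ h₂
    · rw [ih k h₂]; congr 2; omega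
    · obtain rfl : k = 2 ^ n - 1 := by omega
      simp only [List.getElem_singleton, Nat.add_sub_cancel]
      rw [Nat.sub_add_cancel (Nat.two_pow_pos n), grayCode_two_pow]
    · obtain ⟨t, rfl⟩ : ∃ t, k = 2 ^ n + t := ⟨k - 2 ^ n, by omega⟩
      have ht : t < (aSeq (n + 1)).length := by omega
      have hsub : 2 ^ n + t - ((aSeq (n + 1)).length + 1) = t := by omega
      simp only [hsub, Nat.add_sub_add_right]
      rw [Nat.add_assoc, grayCode_two_pow_add (by omega), grayCode_two_pow_add (by omega),
        ih t ht, Nat.xor_assoc]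

def walsh (n j c : ℕ) : ℝ :=
  ∏ k ∈ Finset.range n, if j.testBit k && c.testBit k then -1 else 1

theorem walsh_zero_right (n j : ℕ) : walsh n j 0 = 1 := by
  simp [walsh]

theorem walsh_xor (n j a b : ℕ) : walsh n j (a ^^^ b) = walsh n j a * walsh n j b := by
  rw [walsh, walsh, walsh, ← Finset.prod_mul_distrib]
  refine Finset.prod_congr rfl fun k _ => ?_
  rw [Nat.testBit_xor]
  cases j.testBit k <;> cases a.testBit k <;> cases b.testBit k <;> norm_num

theorem walsh_two_pow {n p : ℕ} (hp : p < n) (j : ℕ) :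
    walsh n j (2 ^ p) = if j.testBit p then -1 else 1 := by
  rw [walsh, Finset.prod_eq_single p]
  · simp
  · intro k _ hk
    simp [Ne.symm hk]
  · simp [hp]

theorem walsh_succ (n j c : ℕ) :
    walsh (n + 1) j c = walsh n (j / 2) (c / 2) * if j % 2 = 1 ∧ c % 2 = 1 then -1 else 1 := by
  simp [walsh, Finset.prod_range_succ', Nat.testBit_div_two]

theorem r2_apply (a b : Fin 2) : r2 a b = if a.val = 1 ∧ b.val = 1 then -1 else 1 := by
  fin_cases a <;> fin_cases b <;> rfl

theorem r2pow_apply (n : ℕ) (j c : Fin (2 ^ n)) : r2pow n j c = walsh n j c := by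
  induction n with
  | zero =>
    obtain rfl : j = c := Subsingleton.elim (α := Fin 1) j c
    simp [r2pow, walsh]
  | succ n ih =>
    simp only [r2pow, castM, kron, ih, r2_apply, walsh_succ]
    rfl

theorem vvec_apply {n m : ℕ} (hm : 1 ≤ m) (hmn : m ≤ n) (j : Fin (2 ^ n)) :
    vvec (n + 1) m j = if j.val.testBit (n - m) then -1 else 1 := by
  rw [vvec, dif_pos ⟨hm, hmn⟩]
  simp only [castV, kronV, onesV, one_mul, mul_one, Fin.val_cast, Nat.add_sub_cancel,
    Nat.testBit_eq_decide_div_mod_eq]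
  rcases Nat.mod_two_eq_zero_or_one (j / 2 ^ (n - m)) with h | h <;> simp [h, signV]

theorem rMat_apply (n : ℕ) (i j : Fin (2 ^ n)) :
    rMat (n + 1) j i = walsh n j (Nat.grayCode i) := by
  have hlen := length_aSeq n
  -- Column `i < 2^n` only reads `A(k)` for `k < 2^n - 1`, so the trailing `1` of `A` never occurs.
  suffices h : ∀ i ≤ (aSeq (n + 1)).length,
      ∏ k ∈ Finset.range i, vvec (n + 1) ((ASeq (n + 1)).getD k 1) j =
        walsh n j (Nat.grayCode i) from
    h i (by have := i.isLt; omega)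
  intro i hi
  induction i with
  | zero => simp [Nat.grayCode_zero, walsh_zero_right]
  | succ k ih =>
    have hk : k < (aSeq (n + 1)).length := hi
    have hbounds := mem_aSeq (List.getElem_mem hk)
    have hbit : n - (aSeq (n + 1))[k] < n := by omega
    rw [Finset.prod_range_succ, ih hk.le, ASeq, List.getD_append _ _ _ _ hk,
      List.getD_eq_getElem _ _ hk, vvec_apply hbounds.1 hbounds.2, ← walsh_two_pow hbit,
      ← walsh_xor, grayCode_succ_eq_xor_aSeq n k hk]

def grayPerm (n : ℕ) : Equiv.Perm (Fin (2 ^ n)) :=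
  Equiv.ofBijective (fun i => ⟨Nat.grayCode i, Nat.grayCode_lt_two_pow i.isLt⟩) <|
    Finite.injective_iff_bijective.mp fun _ _ h => Fin.ext (Nat.grayCode_injective (Fin.mk.inj h))

theorem stmt7_general (n : ℕ) :
    ∃ σ : Equiv.Perm (Fin (2 ^ n)), ∀ i j : Fin (2 ^ n),
      rMat (n + 1) j i = r2pow n j (σ i) :=
  ⟨grayPerm n, fun i j => by rw [rMat_apply, r2pow_apply]; rfl⟩

theorem stmt7 (n : ℕ) (hn : 1 ≤ n) :
    ∃ σ : Equiv.Perm (Fin (2 ^ n)), ∀ i j : Fin (2 ^ n),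
      rMat (n + 1) j i = r2pow n j (σ i) :=
  stmt7_general n

end
end

section
/- Let n ≥ 2. The absolute value of the determinant of r_n satisfies |det(r_n)| = |det(r_2)|^{(n−1)·2^{n−2}} = 2^{(n−1)·2^{n−2}}. -/
open Matrix

noncomputable section

/-!
The entry `(j, i)` of `r_n` is `∏_b (-1)^(c_b · j_b)`, where `j_b` is bit `b` of `j` and `c_b`
counts the occurrences of `n - 1 - b` among the first `i` terms of `a_n`: the columns are characters
of `(ℤ/2)^(n-1)`. Because `a_n` is the ruler sequence, the parity vectors of these counts are
pairwise distinct for `i < 2^(n-1)` (they form a Gray code), so distinct columns are orthogonal and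
`r_nᵀ r_n = 2^(n-1) I`. Hence `det(r_n)^2 = 2^((n-1) 2^(n-1))`.
-/

open Finset

section CharacterSums

variable {R : Type*}

theorem neg_one_pow_div_two_pow [Ring R] (j b : ℕ) :
    (-1 : R) ^ (j / 2 ^ b) = if j.testBit b then -1 else 1 := by
  rw [neg_one_pow_eq_pow_mod_two, Nat.testBit_eq_decide_div_mod_eq]
  rcases Nat.mod_two_eq_zero_or_one (j / 2 ^ b) with h | h <;> simp [h]

theorem neg_one_pow_xor_two_pow_div [Ring R] (j b b₀ : ℕ) :
    (-1 : R) ^ ((j ^^^ 2 ^ b₀) / 2 ^ b) = (if b = b₀ then -1 else 1) * (-1) ^ (j / 2 ^ b) := by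
  simp only [neg_one_pow_div_two_pow, Nat.testBit_xor, Nat.testBit_two_pow]
  by_cases h : b = b₀ <;> cases j.testBit b <;> simp [h, eq_comm]

/-- Flipping bit `b₀` is an involution of `[0, 2 ^ N)` that changes the sign of every term. -/
theorem sum_range_two_pow_prod_neg_one_pow_eq_zero [CommRing R] {N b₀ : ℕ} {S : Finset ℕ}
    {e : ℕ → ℕ} (hN : b₀ < N) (hS : b₀ ∈ S) (he : Odd (e b₀)) :
    ∑ j ∈ range (2 ^ N), ∏ b ∈ S, (-1 : R) ^ (e b * (j / 2 ^ b)) = 0 := by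
  refine sum_involution (fun j _ => j ^^^ 2 ^ b₀) (fun j _ => ?_) (fun j _ _ => ?_)
    (fun j hj => ?_) (fun j _ => ?_)
  · simp_rw [pow_mul', neg_one_pow_xor_two_pow_div, mul_pow, prod_mul_distrib, ite_pow, one_pow,
      prod_ite_eq' S b₀, if_pos hS, he.neg_one_pow]
    ring
  · simp
  · exact mem_range.2 (Nat.xor_lt_two_pow (mem_range.1 hj) (Nat.pow_lt_pow_right (by norm_num) hN))
  · simp

end CharacterSums

section PrefixParity

def prefixParity (l : List ℕ) (i : ℕ) : ℕ → ZMod 2 := fun m => ((l.take i).count m : ZMod 2)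

theorem prefixParity_append_of_le {x : List ℕ} (y : List ℕ) {t : ℕ} (ht : t ≤ x.length) :
    prefixParity (x ++ y) t = prefixParity x t := by
  unfold prefixParity
  rw [List.take_append_of_le_length ht]

theorem prefixParity_append_length_add (x y : List ℕ) (t : ℕ) :
    prefixParity (x ++ y) (x.length + t) = prefixParity x x.length + prefixParity y t := by
  ext m
  simp [prefixParity, List.take_length_add_append]

theorem prefixParity_map_succ (l : List ℕ) (t m : ℕ) :
    prefixParity (l.map (· + 1)) t (m + 1) = prefixParity l t m := by
  rw [prefixParity, prefixParity, ← List.map_take,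
    List.count_map_of_injective _ _ (add_left_injective 1)]

theorem prefixParity_eq_of_map_succ {l : List ℕ} {t t' : ℕ}
    (h : prefixParity (l.map (· + 1)) t = prefixParity (l.map (· + 1)) t') :
    prefixParity l t = prefixParity l t' :=
  funext fun m => by simpa only [prefixParity_map_succ] using congrFun h (m + 1)

theorem prefixParity_of_notMem {l : List ℕ} {m : ℕ} (hm : m ∉ l) (t : ℕ) :
    prefixParity l t m = 0 := by
  rw [prefixParity, List.count_eq_zero.2 fun h => hm (List.mem_of_mem_take h), Nat.cast_zero]

/-- The count of `1` tells the two halves apart; within a half, the counts of the other values are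
those of `l`, shifted by a constant in the second half. -/
theorem injOn_prefixParity_ruler {l : List ℕ} (h0 : 0 ∉ l)
    (hl : Set.InjOn (prefixParity l) (Set.Iic l.length)) :
    Set.InjOn (prefixParity (l.map (· + 1) ++ [1] ++ l.map (· + 1)))
      (Set.Iic (2 * l.length + 1)) := by
  set s := l.map (· + 1)
  have hs : s.length = l.length := List.length_map _
  have lower : ∀ t ≤ l.length, prefixParity (s ++ [1] ++ s) t = prefixParity s t := fun t ht => by
    rw [prefixParity_append_of_le _ (by simp; omega), prefixParity_append_of_le _ (by omega)]
  have upper : ∀ t, prefixParity (s ++ [1] ++ s) (l.length + 1 + t) =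
      prefixParity (s ++ [1]) (l.length + 1) + prefixParity s t := fun t => by
    have := prefixParity_append_length_add (s ++ [1]) s t
    rwa [List.length_append, hs, List.length_singleton] at this
  have hs1 : ∀ t, prefixParity s t 1 = 0 := fun t => by
    rw [prefixParity_map_succ, prefixParity_of_notMem h0]
  have hmid : prefixParity (s ++ [1]) (l.length + 1) 1 = 1 := by
    have := prefixParity_append_length_add s [1] 1
    rw [hs] at this
    rw [this, Pi.add_apply, hs1, zero_add]
    rfl
  have halves : ∀ i ≤ 2 * l.length + 1, i ≤ l.length ∨ ∃ t ≤ l.length, i = l.length + 1 + t :=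
    fun i hi => by
      rcases le_or_gt i l.length with h | h
      · exact Or.inl h
      · exact Or.inr ⟨i - (l.length + 1), by omega, by omega⟩
  intro i hi i' hi' h
  rcases halves i hi with hi | ⟨t, ht, rfl⟩ <;> rcases halves i' hi' with hi' | ⟨t', ht', rfl⟩
  · rw [lower i hi, lower i' hi'] at h
    exact hl hi hi' (prefixParity_eq_of_map_succ h)
  · have := congrFun h 1
    rw [lower i hi, upper, Pi.add_apply, hs1, hs1, hmid] at this
    exact absurd this (by decide)
  · have := congrFun h 1
    rw [lower i' hi', upper, Pi.add_apply, hs1, hs1, hmid] at this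
    exact absurd this (by decide)
  · rw [upper, upper] at h
    rw [hl ht ht' (prefixParity_eq_of_map_succ (add_left_cancel h))]

end PrefixParity

section BinaryTreeSequence

theorem aSeq_length_add_one : ∀ n : ℕ, (aSeq n).length + 1 = 2 ^ (n - 1)
  | 0 | 1 | 2 => rfl
  | n + 3 => by
    have ih := aSeq_length_add_one (n + 2)
    simp only [aSeq, List.length_append, List.length_map, List.length_singleton]
    rw [show n + 3 - 1 = n + 2 - 1 + 1 by omega, pow_succ]
    omega

theorem aSeq_mem_bounds : ∀ n : ℕ, ∀ x ∈ aSeq n, 1 ≤ x ∧ x ≤ n - 1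
  | 0 | 1 | 2 => by simp [aSeq]
  | n + 3 => by
    intro x hx
    simp only [aSeq, List.mem_append, List.mem_map, List.mem_singleton] at hx
    rcases hx with (⟨y, hy, rfl⟩ | rfl) | ⟨y, hy, rfl⟩
    all_goals first | omega | have := aSeq_mem_bounds (n + 2) y hy; omega

theorem injOn_prefixParity_aSeq : ∀ n : ℕ,
    Set.InjOn (prefixParity (aSeq n)) (Set.Iic (aSeq n).length)
  | 0 | 1 => fun i hi i' hi' _ => by simp_all [aSeq]
  | 2 => by
    intro i hi i' hi' h
    simp only [aSeq, List.length_singleton, Set.mem_Iic] at hi hi'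
    interval_cases i <;> interval_cases i' <;> first | rfl | exact absurd (congrFun h 1) (by decide)
  | n + 3 => by
    have h0 : 0 ∉ aSeq (n + 2) := fun h => by have := (aSeq_mem_bounds _ 0 h).1; omega
    have hlen : (aSeq (n + 3)).length = 2 * (aSeq (n + 2)).length + 1 := by simp [aSeq]; omega
    rw [hlen]
    exact injOn_prefixParity_ruler h0 (injOn_prefixParity_aSeq (n + 2))

end BinaryTreeSequence

theorem prod_range_getD_eq_prod_map_take {α M : Type*} [CommMonoid M] (l : List α) (d : α)
    (f : α → M) {i : ℕ} (hi : i ≤ l.length) :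
    ∏ k ∈ range i, f (l.getD k d) = ((l.take i).map f).prod := by
  induction i with
  | zero => simp
  | succ i ih =>
    rw [prod_range_succ, ih (by omega), List.take_add_one, List.map_append, List.prod_append,
      List.getElem?_eq_getElem (by omega), List.getD_eq_getElem _ _ (by omega)]
    simp

theorem signV_mk (q : ℕ) (h : q % 2 < 2) : signV ⟨q % 2, h⟩ = (-1 : ℝ) ^ q := by
  rw [neg_one_pow_eq_pow_mod_two]
  rcases Nat.mod_two_eq_zero_or_one q with hq | hq <;> simp [signV, hq]

theorem vvec_apply_s9 {n m : ℕ} (hm1 : 1 ≤ m) (hm2 : m ≤ n - 1) (j : Fin (2 ^ (n - 1))) :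
    vvec n m j = (-1 : ℝ) ^ (j.val / 2 ^ (n - 1 - m)) := by
  rw [vvec, dif_pos ⟨hm1, hm2⟩]
  simp only [castV, kronV, onesV, one_mul, mul_one, Fin.val_cast]
  exact signV_mk _ _

theorem rMat_apply_s9 (n : ℕ) (j i : Fin (2 ^ (n - 1))) :
    rMat n j i = ∏ b ∈ range n, (-1 : ℝ) ^ (((aSeq n).take i).count (n - 1 - b) * (j / 2 ^ b)) := by
  have hi : i.val ≤ (aSeq n).length := by have := aSeq_length_add_one n; omega
  set f : ℕ → ℝ := fun m => (-1) ^ (j.val / 2 ^ (n - 1 - m))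
  have hsub : ((aSeq n).take i).toFinset ⊆ range n := fun m hm => by
    have := aSeq_mem_bounds n m (List.mem_of_mem_take (List.mem_toFinset.1 hm))
    exact mem_range.2 (by omega)
  calc rMat n j i = ∏ k ∈ range i, vvec n ((aSeq n).getD k 1) j :=
        prod_congr rfl fun k hk => by
          rw [ASeq, List.getD_append _ _ _ _ (by have := mem_range.1 hk; omega)]
    _ = (((aSeq n).take i).map f).prod := by
        rw [prod_range_getD_eq_prod_map_take _ _ (fun m => vvec n m j) hi]
        congr 1
        refine List.map_congr_left fun m hm => ?_
        have := aSeq_mem_bounds n m (List.mem_of_mem_take hm)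
        exact vvec_apply_s9 this.1 this.2 j
    _ = ∏ m ∈ range n, f m ^ ((aSeq n).take i).count m := by
        rw [prod_list_map_count]
        refine prod_subset hsub fun m _ hm => ?_
        rw [List.count_eq_zero.2 fun h => hm (List.mem_toFinset.2 h), pow_zero]
    _ = _ := by
        rw [← prod_range_reflect]
        refine prod_congr rfl fun b hb => ?_
        rw [← pow_mul', show n - 1 - (n - 1 - b) = b by have := mem_range.1 hb; omega]

theorem exists_odd_count_add_of_ne {n i i' : ℕ} (hi : i ≤ (aSeq n).length)
    (hi' : i' ≤ (aSeq n).length) (h : i ≠ i') :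
    ∃ b < n - 1,
      Odd (((aSeq n).take i).count (n - 1 - b) + ((aSeq n).take i').count (n - 1 - b)) := by
  by_contra! hall
  refine h (injOn_prefixParity_aSeq n hi hi' (funext fun m => ?_))
  by_cases hm : m ∈ aSeq n
  · have hb := aSeq_mem_bounds n m hm
    obtain ⟨r, hr⟩ := Nat.not_odd_iff_even.1 (hall (n - 1 - m) (by omega))
    rw [show n - 1 - (n - 1 - m) = m by omega] at hr
    rw [prefixParity, prefixParity, ZMod.natCast_eq_natCast_iff']
    omega
  · rw [prefixParity_of_notMem hm, prefixParity_of_notMem hm]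

theorem sum_rMat_mul_rMat (n : ℕ) (i i' : Fin (2 ^ (n - 1))) :
    ∑ j, rMat n j i * rMat n j i' = if i = i' then 2 ^ (n - 1) else 0 := by
  have hlen := aSeq_length_add_one n
  simp_rw [rMat_apply_s9, ← prod_mul_distrib, ← pow_add, ← add_mul]
  rw [Fin.sum_univ_eq_sum_range (fun j => ∏ b ∈ range n, (-1 : ℝ) ^
    ((((aSeq n).take i).count (n - 1 - b) + ((aSeq n).take i').count (n - 1 - b)) * (j / 2 ^ b)))]
  split_ifs with h
  · subst h
    simp [← two_mul, pow_mul]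
  · obtain ⟨b, hb, hodd⟩ :=
      exists_odd_count_add_of_ne (n := n) (by omega) (by omega) (Fin.val_ne_of_ne h)
    exact sum_range_two_pow_prod_neg_one_pow_eq_zero hb (mem_range.2 (by omega)) hodd

theorem rMat_transpose_mul_self (n : ℕ) : (rMat n)ᵀ * rMat n = (2 ^ (n - 1) : ℝ) • 1 := by
  ext i i'
  simp [Matrix.mul_apply, Matrix.one_apply, sum_rMat_mul_rMat]

theorem Matrix.det_sq_of_transpose_mul_self_eq_smul_one {ι R : Type*} [Fintype ι] [DecidableEq ι]
    [CommRing R] {A : Matrix ι ι R} {c : R} (h : Aᵀ * A = c • 1) :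
    A.det ^ 2 = c ^ Fintype.card ι := by
  have := congrArg Matrix.det h
  rwa [det_mul, det_transpose, det_smul, det_one, mul_one, ← sq] at this

theorem stmt9_general (n : ℕ) :
    |(rMat n).det| = |r2.det| ^ ((n - 1) * 2 ^ (n - 2)) ∧
    |(rMat n).det| = 2 ^ ((n - 1) * 2 ^ (n - 2)) := by
  have hexp : (n - 1) * 2 ^ (n - 1) = (n - 1) * 2 ^ (n - 2) * 2 := by
    rcases Nat.lt_or_ge n 2 with h | h
    · simp [show n - 1 = 0 by omega]
    · rw [mul_assoc, ← pow_succ, show n - 2 + 1 = n - 1 by omega]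
  have hdet : |(rMat n).det| = 2 ^ ((n - 1) * 2 ^ (n - 2)) := by
    have hsq := Matrix.det_sq_of_transpose_mul_self_eq_smul_one (rMat_transpose_mul_self n)
    refine (pow_left_inj₀ (abs_nonneg _) (by positivity) two_ne_zero).1 ?_
    rw [sq_abs, hsq, Fintype.card_fin, ← pow_mul, ← pow_mul, hexp]
  have hr2 : |r2.det| = 2 := by
    rw [r2, det_fin_two_of]
    norm_num
  exact ⟨by rw [hdet, hr2], hdet⟩

theorem stmt9 (n : ℕ) (hn : 2 ≤ n) :
    |(rMat n).det| = |r2.det| ^ ((n - 1) * 2 ^ (n - 2)) ∧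
    |(rMat n).det| = 2 ^ ((n - 1) * 2 ^ (n - 2)) :=
  stmt9_general n

end
end

section
/- Let n ≥ 2, let A_n be the binary-tree sequence, and let r_n be the associated 2^{n-1} × 2^{n-1} matrix. Then for all i, j ∈ {1, …, 2^{n-1}}, the (j, i) entry of r_n equals ∏_{k=1}^{i-1} (−1)^{ρ(j)_{A_n(k)}}, where ρ(j) = (ρ(j)_1, …, ρ(j)_{n-1}) ∈ {0,1}^{n-1} are the binary digits of j−1 with ρ(j)_1 the most significant digit; equivalently ρ(j)_m = ⌊(j−1)/2^{n−1−m}⌋ mod 2. -/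
open Matrix

noncomputable section

lemma aSeq_mem : ∀ n, ∀ x ∈ aSeq n, 1 ≤ x ∧ x ≤ n - 1
  | 0 => by simp [aSeq]
  | 1 => by simp [aSeq]
  | 2 => by simp [aSeq]
  | (n+3) => by
      intro x hx
      simp only [aSeq, List.mem_append, List.mem_map] at hx
      rcases hx with (⟨y, hy, rfl⟩ | hx) | ⟨y, hy, rfl⟩
      · have := aSeq_mem (n+2) y hy; omega
      · simp at hx; omega
      · have := aSeq_mem (n+2) y hy; omega

lemma ASeq_getD_mem (n : ℕ) (hn : 2 ≤ n) (k : ℕ) :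
    1 ≤ (ASeq n).getD k 1 ∧ (ASeq n).getD k 1 ≤ n - 1 := by
  by_cases hk : k < (ASeq n).length
  · rw [List.getD_eq_getElem _ _ hk]
    have hmem : (ASeq n)[k] ∈ ASeq n := List.getElem_mem hk
    simp only [ASeq, List.mem_append] at hmem
    rcases hmem with h | h
    · exact aSeq_mem n _ h
    · rw [List.mem_singleton] at h; simp only [ASeq]; rw [h]; omega
  · rw [List.getD_eq_default _ _ (by omega)]; omega

lemma vvec_eq (n m : ℕ) (hm : 1 ≤ m) (hm2 : m ≤ n - 1) (j : Fin (2 ^ (n - 1))) :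
    vvec n m j = (-1 : ℝ) ^ ((j.val / 2 ^ (n - 1 - m)) % 2) := by
  rw [vvec, dif_pos ⟨hm, hm2⟩]
  simp only [castV, kronV, onesV, one_mul, mul_one, Fin.cast_mk, Fin.coe_cast]
  have h2 := Nat.mod_two_eq_zero_or_one (j.val / 2 ^ (n - 1 - m))
  rcases h2 with h2 | h2 <;> simp [signV, h2]

theorem stmt14 (n : ℕ) (hn : 2 ≤ n) (i j : Fin (2 ^ (n - 1))) :
    rMat n j i = ∏ k ∈ Finset.range i.val,
      (-1 : ℝ) ^ ((j.val / 2 ^ (n - 1 - (ASeq n).getD k 1)) % 2) := by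
  rw [rMat]
  refine Finset.prod_congr rfl fun k _ => ?_
  obtain ⟨h1, h2⟩ := ASeq_getD_mem n hn k
  exact vvec_eq n _ h1 h2 j

end
end
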